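/- Let R = (r_{ij}) and S = (s_{ij}) be matrices with entries in A, let f and g be monotonically increasing weight functions with C_g = ∑_{n=1}^∞ 1/g(n) < ∞, and suppose ‖R‖_f, ‖R‖_g, ‖S‖_f, ‖S‖_g are all finite. Then for all i, j ∈ ℕ the series ∑_{k=1}^∞ r_{ik} s_{kj} converges absolutely in A, i.e. ∑_{k=1}^∞ ‖r_{ik}‖·‖s_{kj}‖ < ∞. -/

import Mathlib

/-- For matrices `R, S` over a (not necessarily unital) Banach algebra `A`,
monotone weights `f, g : ℕ+ → (0,∞)` with `C_g = ∑ 1/g(n) < ∞`, and all four weighted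
norms `‖R‖_f, ‖R‖_g, ‖S‖_f, ‖S‖_g` finite, the series `∑_k r_{ik} s_{kj}` converges
absolutely in `A` for all `i, j`. -/
theorem matMul_summable
    {A : Type*} [NonUnitalNormedRing A] [CompleteSpace A]
    (f g : ℕ+ → ℝ) (hfmono : Monotone f) (hfpos : ∀ n, 0 < f n)
    (hgmono : Monotone g) (hgpos : ∀ n, 0 < g n)
    (hCg : Summable fun n : ℕ+ => 1 / g n)
    (R S : ℕ+ → ℕ+ → A)
    (hRf : BddAbove (Set.range fun p : ℕ+ × ℕ+ => f (max p.1 p.2) * ‖R p.1 p.2‖))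
    (hRg : BddAbove (Set.range fun p : ℕ+ × ℕ+ => g (max p.1 p.2) * ‖R p.1 p.2‖))
    (hSf : BddAbove (Set.range fun p : ℕ+ × ℕ+ => f (max p.1 p.2) * ‖S p.1 p.2‖))
    (hSg : BddAbove (Set.range fun p : ℕ+ × ℕ+ => g (max p.1 p.2) * ‖S p.1 p.2‖)) :
    ∀ i j : ℕ+, Summable fun k : ℕ+ => ‖R i k‖ * ‖S k j‖ := by
  obtain ⟨M, hM⟩ := hRg
  obtain ⟨N, hN⟩ := hSf
  intro i j
  have hRb : ∀ k : ℕ+, ‖R i k‖ ≤ M / g k := by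
    intro k
    have h1 : g (max i k) * ‖R i k‖ ≤ M := hM ⟨(i, k), rfl⟩
    have h2 : g k ≤ g (max i k) := hgmono (le_max_right _ _)
    have h3 : g k * ‖R i k‖ ≤ M :=
      le_trans (mul_le_mul_of_nonneg_right h2 (norm_nonneg _)) h1
    rw [le_div_iff₀ (hgpos k)]
    linarith [h3]
  have hSb : ∀ k : ℕ+, ‖S k j‖ ≤ N / f 1 := by
    intro k
    have h1 : f (max k j) * ‖S k j‖ ≤ N := hN ⟨(k, j), rfl⟩
    have h2 : f 1 ≤ f (max k j) := hfmono (le_trans k.one_le (le_max_left _ _))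
    have h3 : f 1 * ‖S k j‖ ≤ N :=
      le_trans (mul_le_mul_of_nonneg_right h2 (norm_nonneg _)) h1
    rw [le_div_iff₀ (hfpos 1)]
    linarith [h3]
  have hMnn : 0 ≤ M := le_trans (mul_nonneg (hgpos _).le (norm_nonneg _)) (hM ⟨(i, i), rfl⟩)
  have hNnn : 0 ≤ N := le_trans (mul_nonneg (hfpos _).le (norm_nonneg _)) (hN ⟨(j, j), rfl⟩)
  refine Summable.of_nonneg_of_le
    (fun k => mul_nonneg (norm_nonneg _) (norm_nonneg _)) ?_
    (hCg.mul_left (M * (N / f 1)))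
  intro k
  calc ‖R i k‖ * ‖S k j‖ ≤ (M / g k) * (N / f 1) :=
        mul_le_mul (hRb k) (hSb k) (norm_nonneg _)
          (div_nonneg hMnn (hgpos k).le)
    _ = (M * (N / f 1)) * (1 / g k) := by field_simp
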